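/- Let n ≥ 1 and let A be an n×n nonnegative real matrix such that for all i, j either A_{ij} > 0 or A_{ji} > 0. Define B by B_{ij} = max(A_{ij}, (A_{ji})^{-}) where t^{-} = 1/t if t > 0 and t^{-} = 0 otherwise, and let μ = λ(B) be the max-times spectral radius of B. A positive vector x ∈ ℝ_{>0}^n satisfies ρ(A, x) = μ (i.e., x minimizes ρ(A, ·) over positive vectors) if and only if there exists a positive vector u ∈ ℝ_{>0}^n such that x = (μ^{-1}B)^* ⊗ u. -/

import Mathlib

open scoped BigOperators

noncomputable section

/-- The max-times spectral radius (maximum geometric cycle mean) of a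
nonnegative `n × n` real matrix. -/
def mtSpecRad {n : ℕ} (A : Matrix (Fin n) (Fin n) ℝ) : ℝ :=
  sSup { r : ℝ | ∃ (k : ℕ) (hk : 0 < k), k ≤ n ∧ ∃ f : Fin k → Fin n,
    r = (∏ t : Fin k, A (f t) (f ⟨((t : ℕ) + 1) % k, Nat.mod_lt _ hk⟩)) ^ ((k : ℝ)⁻¹) }

/-- The maximum cycle mean of a real `n × n` matrix (max-plus spectral radius). -/
def mpCycleMean {n : ℕ} (A : Matrix (Fin n) (Fin n) ℝ) : ℝ :=
  sSup { r : ℝ | ∃ (k : ℕ) (hk : 0 < k), k ≤ n ∧ ∃ f : Fin k → Fin n,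
    r = (∑ t : Fin k, A (f t) (f ⟨((t : ℕ) + 1) % k, Nat.mod_lt _ hk⟩)) / (k : ℝ) }

/-- Max-times matrix product. -/
def mtMul {n : ℕ} (A B : Matrix (Fin n) (Fin n) ℝ) : Matrix (Fin n) (Fin n) ℝ :=
  Matrix.of fun i j => ⨆ k : Fin n, A i k * B k j

/-- Max-times matrix powers, with `A^{⊗0} = I`. -/
def mtPow {n : ℕ} (A : Matrix (Fin n) (Fin n) ℝ) : ℕ → Matrix (Fin n) (Fin n) ℝ
  | 0 => Matrix.of fun i j => if i = j then 1 else 0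
  | (k + 1) => mtMul (mtPow A k) A

/-- Max-times Kleene star: entrywise maximum of `I, S, S^{⊗2}, …, S^{⊗(n-1)}`. -/
def mtStar {n : ℕ} (S : Matrix (Fin n) (Fin n) ℝ) : Matrix (Fin n) (Fin n) ℝ :=
  Matrix.of fun i j => ⨆ k : Fin n, mtPow S (k : ℕ) i j

/-- Max-times matrix-vector product. -/
def mtVecMul {n : ℕ} (S : Matrix (Fin n) (Fin n) ℝ) (u : Fin n → ℝ) : Fin n → ℝ :=
  fun i => ⨆ j, S i j * u j

/-- Max-plus matrix product. -/
def mpMul {n : ℕ} (A B : Matrix (Fin n) (Fin n) ℝ) : Matrix (Fin n) (Fin n) ℝ :=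
  Matrix.of fun i j => ⨆ k : Fin n, (A i k + B k j)

/-- `mpPow A k` is the max-plus power `A^{⊗(k+1)}`. -/
def mpPow {n : ℕ} (A : Matrix (Fin n) (Fin n) ℝ) : ℕ → Matrix (Fin n) (Fin n) ℝ
  | 0 => A
  | (k + 1) => mpMul (mpPow A k) A

/-- Max-plus Kleene star: `S^*_{ii} = max(0, max_{1≤k≤n-1} (S^{⊗k})_{ii})` and
`S^*_{ij} = max_{1≤k≤n-1} (S^{⊗k})_{ij}` for `i ≠ j`. -/
def mpStar {n : ℕ} (S : Matrix (Fin n) (Fin n) ℝ) : Matrix (Fin n) (Fin n) ℝ :=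
  Matrix.of fun i j =>
    if i = j then max 0 (⨆ k : Fin (n - 1), mpPow S (k : ℕ) i j)
    else ⨆ k : Fin (n - 1), mpPow S (k : ℕ) i j

/-- Max-plus matrix-vector product. -/
def mpVecMul {n : ℕ} (S : Matrix (Fin n) (Fin n) ℝ) (x : Fin n → ℝ) : Fin n → ℝ :=
  fun i => ⨆ j, (S i j + x j)

/-- Chebyshev-like (max-times) distance between a nonnegative matrix `A` and the
rank-one reciprocal matrix with entries `x i / x j`. -/
def mtRho {n : ℕ} (A : Matrix (Fin n) (Fin n) ℝ) (x : Fin n → ℝ) : ℝ :=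
  max (⨆ p : Fin n × Fin n, A p.1 p.2 * x p.2 / x p.1)
    (sSup { r : ℝ | ∃ i j, 0 < A i j ∧ r = x i / (A i j * x j) })

/-- The alternating max-times product `A ⊗ C^{⊗ i₁} ⊗ A ⊗ C^{⊗ i₂} ⊗ ⋯ ⊗ A ⊗ C^{⊗ i_k}`. -/
def mtChain {n : ℕ} (A C : Matrix (Fin n) (Fin n) ℝ) :
    (k : ℕ) → (Fin k → ℕ) → Matrix (Fin n) (Fin n) ℝ
  | 0, _ => Matrix.of fun i j => if i = j then 1 else 0
  | (k + 1), f => mtMul (mtMul A (mtPow C (f 0))) (mtChain A C k (fun t => f t.succ))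

/-- The optimal value `θ` of the constrained max-times approximation problem. -/
def mtTheta {n : ℕ} (A C : Matrix (Fin n) (Fin n) ℝ) : ℝ :=
  max (mtSpecRad A)
    (sSup { r : ℝ | ∃ k : ℕ, 0 < k ∧ k ≤ n - 1 ∧ ∃ f : Fin k → ℕ,
      1 ≤ ∑ t, f t ∧ (∑ t, f t) ≤ n - k ∧
      r = (⨆ i, mtChain A C k f i i) ^ ((k : ℝ)⁻¹) })


-- helper: finite ciSup attained
lemma aux_ciSup_attained {ι : Type*} [Nonempty ι] [Finite ι] (g : ι → ℝ) :
    ∃ k, (⨆ i, g i) = g k := by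
  obtain ⟨k, hk⟩ := Finite.exists_max g
  exact ⟨k, le_antisymm (ciSup_le hk) (le_ciSup (Finite.bddAbove_range g) k)⟩

lemma aux_le_ciSup {ι : Type*} [Finite ι] (g : ι → ℝ) (k : ι) : g k ≤ ⨆ i, g i :=
  le_ciSup (Finite.bddAbove_range g) k

lemma mtPow_succ_apply {n : ℕ} (C : Matrix (Fin n) (Fin n) ℝ) (m : ℕ) (i j : Fin n) :
    mtPow C (m + 1) i j = ⨆ k, mtPow C m i k * C k j := rfl

lemma mtPow_nonneg {n : ℕ} (hn : 1 ≤ n) {C : Matrix (Fin n) (Fin n) ℝ}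
    (hC : ∀ i j, 0 ≤ C i j) : ∀ m i j, 0 ≤ mtPow C m i j := by
  have : Nonempty (Fin n) := ⟨⟨0, hn⟩⟩
  intro m
  induction m with
  | zero => intro i j; simp only [mtPow, Matrix.of_apply]; split <;> norm_num
  | succ m ih =>
    intro i j
    calc (0:ℝ) ≤ mtPow C m i i * C i j := mul_nonneg (ih i i) (hC i j)
    _ ≤ _ := by rw [mtPow_succ_apply]; exact aux_le_ciSup (fun k => mtPow C m i k * C k j) i

lemma mtPow_succ_le {n : ℕ} (hn : 1 ≤ n) {C : Matrix (Fin n) (Fin n) ℝ}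
    {Y : ℝ} (m : ℕ) (i j : Fin n)
    (h : ∀ k, mtPow C m i k * C k j ≤ Y) : mtPow C (m + 1) i j ≤ Y := by
  have : Nonempty (Fin n) := ⟨⟨0, hn⟩⟩
  rw [mtPow_succ_apply]; exact ciSup_le h

lemma le_mtPow_succ {n : ℕ} {C : Matrix (Fin n) (Fin n) ℝ} (m : ℕ) (i k j : Fin n) :
    mtPow C m i k * C k j ≤ mtPow C (m + 1) i j := by
  rw [mtPow_succ_apply]; exact aux_le_ciSup (fun k => mtPow C m i k * C k j) k

-- path weight over ℕ-indexed paths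
def pw {n : ℕ} (C : Matrix (Fin n) (Fin n) ℝ) (m : ℕ) (g : ℕ → Fin n) : ℝ :=
  ∏ t ∈ Finset.range m, C (g t) (g (t + 1))

lemma pw_le_mtPow {n : ℕ} (hn : 1 ≤ n) {C : Matrix (Fin n) (Fin n) ℝ}
    (hC : ∀ i j, 0 ≤ C i j) : ∀ m (g : ℕ → Fin n), pw C m g ≤ mtPow C m (g 0) (g m) := by
  intro m
  induction m with
  | zero => intro g; simp [pw, mtPow]
  | succ m ih =>
    intro g
    have : pw C (m+1) g = pw C m g * C (g m) (g (m+1)) := Finset.prod_range_succ _ m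
    rw [this]
    calc pw C m g * C (g m) (g (m+1)) ≤ mtPow C m (g 0) (g m) * C (g m) (g (m+1)) := by
          apply mul_le_mul_of_nonneg_right (ih g) (hC _ _)
    _ ≤ _ := le_mtPow_succ m _ _ _

lemma mtPow_one {n : ℕ} (hn : 1 ≤ n) {C : Matrix (Fin n) (Fin n) ℝ}
    (hC : ∀ i j, 0 ≤ C i j) (i j : Fin n) : mtPow C 1 i j = C i j := by
  have : Nonempty (Fin n) := ⟨⟨0, hn⟩⟩
  rw [show (1:ℕ) = 0 + 1 from rfl, mtPow_succ_apply]
  apply le_antisymm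
  · apply ciSup_le
    intro k
    simp only [mtPow, Matrix.of_apply]
    split
    · next h => subst h; simp
    · simp [hC i j]
  · have := aux_le_ciSup (fun k => mtPow C 0 i k * C k j) i
    simpa [mtPow] using this

-- existence of a maximizing path, for m ≥ 1
lemma exists_path {n : ℕ} (hn : 1 ≤ n) {C : Matrix (Fin n) (Fin n) ℝ}
    (hC : ∀ i j, 0 ≤ C i j) :
    ∀ m, 1 ≤ m → ∀ i j : Fin n, ∃ g : ℕ → Fin n, g 0 = i ∧ g m = j ∧
      pw C m g = mtPow C m i j := by
  have hne : Nonempty (Fin n) := ⟨⟨0, hn⟩⟩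
  intro m hm
  induction m with
  | zero => omega
  | succ m ih =>
    intro i j
    rcases Nat.eq_or_lt_of_le hm with h1 | h1
    · -- m + 1 = 1
      have hm0 : m = 0 := by omega
      subst hm0
      refine ⟨fun t => if t = 0 then i else j, by simp, by simp, ?_⟩
      simp [pw, mtPow_one hn hC]
    · have hm1 : 1 ≤ m := by omega
      obtain ⟨k₀, hk₀⟩ := aux_ciSup_attained (fun k => mtPow C m i k * C k j)
      obtain ⟨g, hg0, hgm, hgw⟩ := ih hm1 i k₀
      refine ⟨fun t => if t ≤ m then g t else j, by simp [hg0], by simp, ?_⟩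
      have hpw : pw C (m+1) (fun t => if t ≤ m then g t else j)
          = pw C m g * C k₀ j := by
        rw [pw, Finset.prod_range_succ]
        congr 1
        · apply Finset.prod_congr rfl
          intro t ht
          have ht' : t < m := Finset.mem_range.mp ht
          simp only [if_pos (show t ≤ m by omega), if_pos (show t + 1 ≤ m by omega)]
        · simp only [if_pos (le_refl m), if_neg (show ¬ m + 1 ≤ m by omega), hgm]
      rw [hpw, hgw]
      show mtPow C m i k₀ * C k₀ j = mtPow C (m+1) i j
      rw [mtPow_succ_apply, hk₀]

-- cycle hypothesis: every cycle of length ≤ n has weight ≤ 1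
-- hcyc : ∀ k (hk : 0 < k), k ≤ n → ∀ f : Fin k → Fin n,
--   (∏ t : Fin k, C (f t) (f ⟨((t : ℕ) + 1) % k, Nat.mod_lt _ hk⟩)) ≤ 1

lemma cycle_prod_Ico_le_one {n : ℕ} {C : Matrix (Fin n) (Fin n) ℝ}
    (hcyc : ∀ (k : ℕ) (hk : 0 < k), k ≤ n → ∀ f : Fin k → Fin n,
      (∏ t : Fin k, C (f t) (f ⟨((t : ℕ) + 1) % k, Nat.mod_lt _ hk⟩)) ≤ 1)
    (g : ℕ → Fin n) {a b : ℕ} (hab : a < b) (hbn : b - a ≤ n) (hgab : g a = g b) :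
    (∏ r ∈ Finset.Ico a b, C (g r) (g (r + 1))) ≤ 1 := by
  set k := b - a with hk
  have hk0 : 0 < k := by omega
  have heq : (∏ r ∈ Finset.Ico a b, C (g r) (g (r + 1)))
      = ∏ t : Fin k, C (g (a + (t : ℕ))) (g (a + ((t : ℕ) + 1) % k)) := by
    rw [Finset.prod_Ico_eq_prod_range]
    rw [← Fin.prod_univ_eq_prod_range (fun r => C (g (a + r)) (g (a + r + 1))) k]
    apply Finset.prod_congr rfl
    intro t _
    congr 1
    rcases Nat.lt_or_ge ((t : ℕ) + 1) k with h | h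
    · rw [Nat.mod_eq_of_lt h, Nat.add_assoc]
    · have ht : (t : ℕ) + 1 = k := by omega
      have hb : a + (t : ℕ) + 1 = b := by omega
      rw [ht, Nat.mod_self, hb, ← hgab]
      simp
  rw [heq]
  have := hcyc k hk0 hbn (fun t => g (a + (t : ℕ)))
  convert this using 1

lemma pw_nonneg {n : ℕ} {C : Matrix (Fin n) (Fin n) ℝ} (hC : ∀ i j, 0 ≤ C i j)
    (m : ℕ) (g : ℕ → Fin n) : 0 ≤ pw C m g :=
  Finset.prod_nonneg fun _ _ => hC _ _

lemma pw_splice {n : ℕ} {C : Matrix (Fin n) (Fin n) ℝ}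
    (g : ℕ → Fin n) {a b m : ℕ} (hab : a < b) (hbm : b ≤ m) (hgab : g a = g b) :
    pw C m g = pw C (m - (b - a)) (fun r => if r < a then g r else g (r + (b - a)))
      * ∏ r ∈ Finset.Ico a b, C (g r) (g (r + 1)) := by
  set d := b - a with hd
  set g' : ℕ → Fin n := fun r => if r < a then g r else g (r + d) with hg'
  have hterm : ∀ r, r < a ∨ a ≤ r → True := fun _ _ => trivial
  have h1 : ∀ r < a, (C (g' r) (g' (r + 1))) = C (g r) (g (r + 1)) := by
    intro r hr
    have hgr : g' r = g r := if_pos hr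
    have hgr1 : g' (r + 1) = g (r + 1) := by
      rcases Nat.lt_or_ge (r+1) a with h | h
      · exact if_pos h
      · have hra : r + 1 = a := by omega
        have : g' (r + 1) = g (r + 1 + d) := if_neg (by omega)
        rw [this, hra]
        have : a + d = b := by omega
        rw [this, ← hgab]
    rw [hgr, hgr1]
  have h2 : ∀ r, a ≤ r → (C (g' r) (g' (r + 1))) = C (g (r + d)) (g (r + d + 1)) := by
    intro r hr
    have hgr : g' r = g (r + d) := if_neg (by omega)
    have hgr1 : g' (r + 1) = g (r + 1 + d) := if_neg (by omega)
    rw [hgr, hgr1]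
    congr 2
    omega
  have ham : a ≤ m - d := by omega
  -- pw C (m - d) g' = (∏ Ico 0 a of g) * (∏ Ico b m of g)
  have hsplit' : pw C (m - d) g' = (∏ r ∈ Finset.Ico 0 a, C (g r) (g (r + 1)))
      * ∏ r ∈ Finset.Ico b m, C (g r) (g (r + 1)) := by
    rw [pw, Finset.range_eq_Ico, ← Finset.prod_Ico_consecutive _ (Nat.zero_le a) ham]
    congr 1
    · apply Finset.prod_congr rfl
      intro r hr
      have : r < a := (Finset.mem_Ico.mp hr).2
      exact h1 r this
    · rw [Finset.prod_Ico_eq_prod_range, Finset.prod_Ico_eq_prod_range]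
      apply Finset.prod_congr (by congr 1; omega)
      intro r _
      rw [h2 (a + r) (by omega)]
      congr 2 <;> omega
  have hsplit : pw C m g = ((∏ r ∈ Finset.Ico 0 a, C (g r) (g (r + 1)))
      * ∏ r ∈ Finset.Ico b m, C (g r) (g (r + 1)))
      * ∏ r ∈ Finset.Ico a b, C (g r) (g (r + 1)) := by
    rw [pw, Finset.range_eq_Ico,
      ← Finset.prod_Ico_consecutive (fun r => C (g r) (g (r+1))) (Nat.zero_le a) (le_of_lt (lt_of_lt_of_le hab hbm)),
      ← Finset.prod_Ico_consecutive (fun r => C (g r) (g (r+1))) (le_of_lt hab) hbm]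
    ring
  rw [hsplit, hsplit']


lemma splice_case {n : ℕ} (hn : 1 ≤ n) {C : Matrix (Fin n) (Fin n) ℝ}
    (hC : ∀ i j, 0 ≤ C i j)
    (hcyc : ∀ (k : ℕ) (hk : 0 < k), k ≤ n → ∀ f : Fin k → Fin n,
      (∏ t : Fin k, C (f t) (f ⟨((t : ℕ) + 1) % k, Nat.mod_lt _ hk⟩)) ≤ 1)
    {m : ℕ} (ih : ∀ m' < m, ∀ i j : Fin n, mtPow C m' i j ≤ mtStar C i j)
    (i j : Fin n) (g : ℕ → Fin n) (hg0 : g 0 = i) (hgm : g m = j)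
    (hgw : pw C m g = mtPow C m i j) (hm : n ≤ m)
    (a b : ℕ) (hab : a < b) (hbn : b ≤ n) (hgab : g a = g b) :
    mtPow C m i j ≤ mtStar C i j := by
  set d := b - a with hd
  have hd0 : 0 < d := by omega
  have hbm : b ≤ m := le_trans hbn hm
  set g' : ℕ → Fin n := fun r => if r < a then g r else g (r + d) with hg'
  have key := pw_splice (C := C) g hab hbm hgab
  have hcy : (∏ r ∈ Finset.Ico a b, C (g r) (g (r + 1))) ≤ 1 :=
    cycle_prod_Ico_le_one hcyc g hab (by omega) hgab
  have hle : mtPow C m i j ≤ pw C (m - d) g' := by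
    rw [← hgw, key]
    calc pw C (m - d) g' * ∏ r ∈ Finset.Ico a b, C (g r) (g (r + 1))
        ≤ pw C (m - d) g' * 1 :=
          mul_le_mul_of_nonneg_left hcy (pw_nonneg hC _ _)
      _ = pw C (m - d) g' := mul_one _
  have hg'0 : g' 0 = i := by
    rcases Nat.eq_zero_or_pos a with h0 | h0
    · have : g' 0 = g (0 + d) := if_neg (by omega)
      rw [this]
      have : 0 + d = b := by omega
      rw [this, ← hgab, h0]
      exact hg0
    · have : g' 0 = g 0 := if_pos h0
      rw [this, hg0]
  have hg'm : g' (m - d) = j := by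
    have : g' (m - d) = g (m - d + d) := if_neg (by omega)
    rw [this]
    have : m - d + d = m := by omega
    rw [this, hgm]
  calc mtPow C m i j ≤ pw C (m - d) g' := hle
    _ ≤ mtPow C (m - d) (g' 0) (g' (m - d)) := pw_le_mtPow hn hC _ _
    _ = mtPow C (m - d) i j := by rw [hg'0, hg'm]
    _ ≤ mtStar C i j := ih (m - d) (by omega) i j

lemma mtPow_le_mtStar {n : ℕ} (hn : 1 ≤ n) {C : Matrix (Fin n) (Fin n) ℝ}
    (hC : ∀ i j, 0 ≤ C i j)
    (hcyc : ∀ (k : ℕ) (hk : 0 < k), k ≤ n → ∀ f : Fin k → Fin n,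
      (∏ t : Fin k, C (f t) (f ⟨((t : ℕ) + 1) % k, Nat.mod_lt _ hk⟩)) ≤ 1) :
    ∀ m (i j : Fin n), mtPow C m i j ≤ mtStar C i j := by
  intro m
  induction m using Nat.strong_induction_on with
  | _ m ih =>
    intro i j
    rcases Nat.lt_or_ge m n with hm | hm
    · exact aux_le_ciSup (fun k : Fin n => mtPow C (k : ℕ) i j) ⟨m, hm⟩
    · have hm1 : 1 ≤ m := le_trans hn hm
      obtain ⟨g, hg0, hgm, hgw⟩ := exists_path hn hC m hm1 i j
      -- pigeonhole on g 0, ..., g n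
      obtain ⟨x, y, hxy, hgxy⟩ := Fintype.exists_ne_map_eq_of_card_lt
        (fun v : Fin (n+1) => g (v : ℕ)) (by simp)
      rcases lt_or_gt_of_ne (fun h : (x:ℕ) = (y:ℕ) => hxy (Fin.ext h)) with hlt | hlt
      case _ =>
        exact splice_case hn hC hcyc ih i j g hg0 hgm hgw hm
          (x:ℕ) (y:ℕ) hlt (Nat.lt_succ_iff.mp y.isLt) hgxy
      case _ =>
        exact splice_case hn hC hcyc ih i j g hg0 hgm hgw hm
          (y:ℕ) (x:ℕ) hlt (Nat.lt_succ_iff.mp x.isLt) hgxy.symm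


lemma mul_mtPow_le {n : ℕ} (hn : 1 ≤ n) {C : Matrix (Fin n) (Fin n) ℝ}
    (hC : ∀ i j, 0 ≤ C i j) :
    ∀ m (i j k : Fin n), C i j * mtPow C m j k ≤ mtPow C (m + 1) i k := by
  have hne : Nonempty (Fin n) := ⟨⟨0, hn⟩⟩
  intro m
  induction m with
  | zero =>
    intro i j k
    rw [mtPow_one hn hC]
    simp only [mtPow, Matrix.of_apply]
    split
    · next h => subst h; simp
    · simpa using hC i k
  | succ m ih =>
    intro i j k
    obtain ⟨l₀, hl₀⟩ := aux_ciSup_attained (fun l => mtPow C m j l * C l k)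
    rw [mtPow_succ_apply C m j k, hl₀, ← mul_assoc]
    calc C i j * mtPow C m j l₀ * C l₀ k ≤ mtPow C (m+1) i l₀ * C l₀ k :=
          mul_le_mul_of_nonneg_right (ih i j l₀) (hC l₀ k)
      _ ≤ _ := le_mtPow_succ (m+1) i l₀ k

lemma one_le_mtStar_diag {n : ℕ} (hn : 1 ≤ n) (C : Matrix (Fin n) (Fin n) ℝ)
    (i : Fin n) : 1 ≤ mtStar C i i := by
  have h := aux_le_ciSup (fun k : Fin n => mtPow C (k : ℕ) i i) ⟨0, hn⟩
  show 1 ≤ ⨆ k : Fin n, mtPow C (k : ℕ) i i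
  simpa [mtPow] using h

lemma mtStar_nonneg {n : ℕ} (hn : 1 ≤ n) {C : Matrix (Fin n) (Fin n) ℝ}
    (hC : ∀ i j, 0 ≤ C i j) (i j : Fin n) : 0 ≤ mtStar C i j := by
  have h := aux_le_ciSup (fun k : Fin n => mtPow C (k : ℕ) i j) ⟨0, hn⟩
  exact le_trans (mtPow_nonneg hn hC _ i j) h

section Spec
variable {n : ℕ} {B : Matrix (Fin n) (Fin n) ℝ}

lemma spec_nonempty (hn : 1 ≤ n) (B : Matrix (Fin n) (Fin n) ℝ) :
    Set.Nonempty { r : ℝ | ∃ (k : ℕ) (hk : 0 < k), k ≤ n ∧ ∃ f : Fin k → Fin n,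
    r = (∏ t : Fin k, B (f t) (f ⟨((t : ℕ) + 1) % k, Nat.mod_lt _ hk⟩)) ^ ((k : ℝ)⁻¹) } := by
  refine ⟨_, ⟨1, Nat.one_pos, hn, fun _ => ⟨0, hn⟩, rfl⟩⟩

lemma spec_bddAbove (hB : ∀ i j, 0 ≤ B i j) :
    BddAbove { r : ℝ | ∃ (k : ℕ) (hk : 0 < k), k ≤ n ∧ ∃ f : Fin k → Fin n,
    r = (∏ t : Fin k, B (f t) (f ⟨((t : ℕ) + 1) % k, Nat.mod_lt _ hk⟩)) ^ ((k : ℝ)⁻¹) } := by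
  classical
  rcases Nat.eq_zero_or_pos n with h0 | hpos
  · refine ⟨0, ?_⟩
    rintro r ⟨k, hk, hkn, f, rfl⟩
    omega
  have hne : Nonempty (Fin n) := ⟨⟨0, hpos⟩⟩
  set M := ⨆ p : Fin n × Fin n, B p.1 p.2 with hM
  have hMle : ∀ i j, B i j ≤ M := fun i j =>
    aux_le_ciSup (fun p : Fin n × Fin n => B p.1 p.2) (i, j)
  have hM0 : 0 ≤ M := le_trans (hB ⟨0,hpos⟩ ⟨0,hpos⟩) (hMle _ _)
  refine ⟨M, ?_⟩
  rintro r ⟨k, hk, hkn, f, rfl⟩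
  have hprod : (∏ t : Fin k, B (f t) (f ⟨((t : ℕ) + 1) % k, Nat.mod_lt _ hk⟩)) ≤ M ^ k := by
    calc (∏ t : Fin k, B (f t) (f ⟨((t : ℕ) + 1) % k, Nat.mod_lt _ hk⟩))
        ≤ ∏ _t : Fin k, M := Finset.prod_le_prod (fun t _ => hB _ _) (fun t _ => hMle _ _)
      _ = M ^ k := by simp
  have h1 : (∏ t : Fin k, B (f t) (f ⟨((t : ℕ) + 1) % k, Nat.mod_lt _ hk⟩)) ^ ((k:ℝ)⁻¹)
      ≤ (M ^ k) ^ ((k:ℝ)⁻¹) :=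
    Real.rpow_le_rpow (Finset.prod_nonneg fun t _ => hB _ _) hprod (by positivity)
  rwa [Real.pow_rpow_inv_natCast hM0 hk.ne'] at h1

lemma cycle_prod_le_pow {x : Fin n → ℝ} (hx : ∀ i, 0 < x i)
    (hB : ∀ i j, 0 ≤ B i j) {ρ : ℝ}
    (hρ : ∀ i j, B i j * x j / x i ≤ ρ)
    (k : ℕ) (hk : 0 < k) (f : Fin k → Fin n) :
    (∏ t : Fin k, B (f t) (f ⟨((t : ℕ) + 1) % k, Nat.mod_lt _ hk⟩)) ≤ ρ ^ k := by
  haveI : NeZero k := ⟨hk.ne'⟩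
  have hσ : ∀ t : Fin k, (⟨((t : ℕ) + 1) % k, Nat.mod_lt _ hk⟩ : Fin k) = t + 1 := by
    intro t
    apply Fin.ext
    simp [Fin.add_def, Nat.add_mod_mod]
  have hBle : ∀ i j, B i j ≤ ρ * x i / x j := by
    intro i j
    rw [le_div_iff₀ (hx j)]
    calc B i j * x j = (B i j * x j / x i) * x i := (div_mul_cancel₀ _ (hx i).ne').symm
      _ ≤ ρ * x i := mul_le_mul_of_nonneg_right (hρ i j) (le_of_lt (hx i))
  have step : (∏ t : Fin k, B (f t) (f ⟨((t : ℕ) + 1) % k, Nat.mod_lt _ hk⟩))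
      ≤ ∏ t : Fin k, (ρ * x (f t) / x (f (t + 1))) := by
    apply Finset.prod_le_prod (fun t _ => hB _ _)
    intro t _
    rw [hσ t]
    exact hBle (f t) (f (t + 1))
  have hperm : (∏ t : Fin k, x (f (t + 1))) = ∏ t : Fin k, x (f t) :=
    Equiv.prod_comp (Equiv.addRight (1 : Fin k)) (fun t => x (f t))
  have hxprod : 0 < ∏ t : Fin k, x (f t) := Finset.prod_pos fun t _ => hx _
  have heval : (∏ t : Fin k, (ρ * x (f t) / x (f (t + 1)))) = ρ ^ k := by
    rw [Finset.prod_div_distrib, Finset.prod_mul_distrib, Finset.prod_const, Finset.card_univ, Fintype.card_fin, hperm]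
    field_simp
  calc _ ≤ _ := step
    _ = ρ ^ k := heval

lemma mtSpecRad_le (hn : 1 ≤ n) (hB : ∀ i j, 0 ≤ B i j) {x : Fin n → ℝ} (hx : ∀ i, 0 < x i)
    {ρ : ℝ} (hρ0 : 0 ≤ ρ) (hρ : ∀ i j, B i j * x j / x i ≤ ρ) :
    mtSpecRad B ≤ ρ := by
  apply csSup_le (spec_nonempty hn B)
  rintro r ⟨k, hk, hkn, f, rfl⟩
  have h := cycle_prod_le_pow hx hB hρ k hk f
  calc (∏ t : Fin k, B (f t) (f ⟨((t : ℕ) + 1) % k, Nat.mod_lt _ hk⟩)) ^ ((k:ℝ)⁻¹)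
      ≤ (ρ ^ k) ^ ((k:ℝ)⁻¹) :=
        Real.rpow_le_rpow (Finset.prod_nonneg fun t _ => hB _ _) h (by positivity)
    _ = ρ := Real.pow_rpow_inv_natCast hρ0 hk.ne'

lemma cycle_prod_le_spec_pow (hB : ∀ i j, 0 ≤ B i j)
    (k : ℕ) (hk : 0 < k) (hkn : k ≤ n) (f : Fin k → Fin n) :
    (∏ t : Fin k, B (f t) (f ⟨((t : ℕ) + 1) % k, Nat.mod_lt _ hk⟩)) ≤ (mtSpecRad B) ^ k := by
  have hmem : (∏ t : Fin k, B (f t) (f ⟨((t : ℕ) + 1) % k, Nat.mod_lt _ hk⟩)) ^ ((k:ℝ)⁻¹)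
      ∈ { r : ℝ | ∃ (k : ℕ) (hk : 0 < k), k ≤ n ∧ ∃ f : Fin k → Fin n,
      r = (∏ t : Fin k, B (f t) (f ⟨((t : ℕ) + 1) % k, Nat.mod_lt _ hk⟩)) ^ ((k : ℝ)⁻¹) } :=
    ⟨k, hk, hkn, f, rfl⟩
  have hle : (∏ t : Fin k, B (f t) (f ⟨((t : ℕ) + 1) % k, Nat.mod_lt _ hk⟩)) ^ ((k:ℝ)⁻¹)
      ≤ mtSpecRad B := le_csSup (spec_bddAbove hB) hmem
  have hprodnn : 0 ≤ (∏ t : Fin k, B (f t) (f ⟨((t : ℕ) + 1) % k, Nat.mod_lt _ hk⟩)) :=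
    Finset.prod_nonneg fun t _ => hB _ _
  calc (∏ t : Fin k, B (f t) (f ⟨((t : ℕ) + 1) % k, Nat.mod_lt _ hk⟩))
      = ((∏ t : Fin k, B (f t) (f ⟨((t : ℕ) + 1) % k, Nat.mod_lt _ hk⟩)) ^ ((k:ℝ)⁻¹)) ^ k :=
        (Real.rpow_inv_natCast_pow hprodnn hk.ne').symm
    _ ≤ (mtSpecRad B) ^ k := pow_le_pow_left₀ (Real.rpow_nonneg hprodnn _) hle k

lemma one_le_mtSpecRad (hn : 1 ≤ n) (hB : ∀ i j, 0 ≤ B i j) (hdiag : ∀ i, 1 ≤ B i i) :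
    1 ≤ mtSpecRad B := by
  have hmem : (B ⟨0, hn⟩ ⟨0, hn⟩ : ℝ) ∈ { r : ℝ | ∃ (k : ℕ) (hk : 0 < k), k ≤ n ∧ ∃ f : Fin k → Fin n,
      r = (∏ t : Fin k, B (f t) (f ⟨((t : ℕ) + 1) % k, Nat.mod_lt _ hk⟩)) ^ ((k : ℝ)⁻¹) } := by
    refine ⟨1, Nat.one_pos, hn, fun _ => ⟨0, hn⟩, ?_⟩
    simp
  exact le_trans (hdiag ⟨0, hn⟩) (le_csSup (spec_bddAbove hB) hmem)

end Spec


lemma mtRho_eq_rhoB {n : ℕ} (hn : 1 ≤ n) {A B : Matrix (Fin n) (Fin n) ℝ}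
    (hA : ∀ i j, 0 ≤ A i j) (hAA : ∀ i j, 0 < A i j ∨ 0 < A j i)
    (hB : ∀ i j, B i j = max (A i j) (A j i)⁻¹)
    {x : Fin n → ℝ} (hx : ∀ i, 0 < x i) :
    mtRho A x = ⨆ p : Fin n × Fin n, B p.1 p.2 * x p.2 / x p.1 := by
  have hne : Nonempty (Fin n) := ⟨⟨0, hn⟩⟩
  set i0 : Fin n := ⟨0, hn⟩
  set ρ := ⨆ p : Fin n × Fin n, B p.1 p.2 * x p.2 / x p.1 with hρ
  have hterm : ∀ i j, B i j * x j / x i ≤ ρ := fun i j =>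
    aux_le_ciSup (fun p : Fin n × Fin n => B p.1 p.2 * x p.2 / x p.1) (i, j)
  have hid : ∀ (i j : Fin n), 0 < A i j → x i / (A i j * x j) = (A i j)⁻¹ * x i / x j := by
    intro i j hij
    field_simp
  have hTsub : ∀ r ∈ { r : ℝ | ∃ i j, 0 < A i j ∧ r = x i / (A i j * x j) }, r ≤ ρ := by
    rintro r ⟨i, j, hij, rfl⟩
    rw [hid i j hij]
    calc (A i j)⁻¹ * x i / x j ≤ B j i * x i / x j := by
          gcongr
          · exact (hx j).le
          · exact (hx i).le
          · rw [hB]; exact le_max_right _ _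
      _ ≤ ρ := hterm j i
  have hTne : Set.Nonempty { r : ℝ | ∃ i j, 0 < A i j ∧ r = x i / (A i j * x j) } :=
    ⟨_, ⟨i0, i0, (hAA i0 i0).elim id id, rfl⟩⟩
  have hTbdd : BddAbove { r : ℝ | ∃ i j, 0 < A i j ∧ r = x i / (A i j * x j) } := ⟨ρ, hTsub⟩
  have hS1le : (⨆ p : Fin n × Fin n, A p.1 p.2 * x p.2 / x p.1) ≤ ρ := by
    apply ciSup_le
    rintro ⟨i, j⟩
    calc A i j * x j / x i ≤ B i j * x j / x i := by
          gcongr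
          · exact (hx i).le
          · exact (hx j).le
          · rw [hB]; exact le_max_left _ _
      _ ≤ ρ := hterm i j
  have hS1nn : (0:ℝ) ≤ ⨆ p : Fin n × Fin n, A p.1 p.2 * x p.2 / x p.1 := by
    refine le_trans ?_ (aux_le_ciSup (fun p : Fin n × Fin n => A p.1 p.2 * x p.2 / x p.1) (i0, i0))
    have := hA i0 i0
    have := (hx i0).le
    positivity
  apply le_antisymm
  · exact max_le hS1le (csSup_le hTne hTsub)
  · apply ciSup_le
    rintro ⟨i, j⟩
    show B i j * x j / x i ≤ _
    have hsplit : B i j * x j / x i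
        = max (A i j * x j / x i) ((A j i)⁻¹ * x j / x i) := by
      rw [hB, div_eq_mul_inv, max_mul_of_nonneg _ _ (hx j).le,
        max_mul_of_nonneg _ _ (inv_nonneg.mpr (hx i).le)]
      simp [div_eq_mul_inv]
    rw [hsplit]
    apply max_le
    · exact le_max_of_le_left
        (aux_le_ciSup (fun p : Fin n × Fin n => A p.1 p.2 * x p.2 / x p.1) (i, j))
    · by_cases hji : 0 < A j i
      · apply le_max_of_le_right
        apply le_csSup hTbdd
        exact ⟨j, i, hji, (hid j i hji).symm⟩
      · have h0 : A j i = 0 := le_antisymm (not_lt.mp hji) (hA j i)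
        rw [h0, inv_zero, zero_mul, zero_div]
        exact le_max_of_le_left hS1nn



/-- A positive vector `x` satisfies `ρ(A, x) = μ` (i.e. minimizes
`ρ(A, ·)`) iff `x = (μ⁻¹ B)^* ⊗ u` for some positive `u`, where
`B_{ij} = max(A_{ij}, (A_{ji})⁻)` and `μ = λ(B)`. -/
theorem mt_rho_minimizers {n : ℕ} (hn : 1 ≤ n) (A : Matrix (Fin n) (Fin n) ℝ)
    (hA : ∀ i j, 0 ≤ A i j) (hAA : ∀ i j, 0 < A i j ∨ 0 < A j i)
    (B : Matrix (Fin n) (Fin n) ℝ) (hB : ∀ i j, B i j = max (A i j) (A j i)⁻¹)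
    (μ : ℝ) (hμ : μ = mtSpecRad B) (x : Fin n → ℝ) (hx : ∀ i, 0 < x i) :
    mtRho A x = μ ↔
      ∃ u : Fin n → ℝ, (∀ i, 0 < u i) ∧ x = mtVecMul (mtStar (μ⁻¹ • B)) u := by
  have hne : Nonempty (Fin n) := ⟨⟨0, hn⟩⟩
  have hBpos : ∀ i j, 0 < B i j := by
    intro i j; rw [hB]
    rcases hAA i j with h | h
    · exact lt_of_lt_of_le h (le_max_left _ _)
    · exact lt_of_lt_of_le (inv_pos.mpr h) (le_max_right _ _)
  have hBnn : ∀ i j, 0 ≤ B i j := fun i j => (hBpos i j).le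
  have hBdiag : ∀ i, 1 ≤ B i i := by
    intro i
    have hAii : 0 < A i i := (hAA i i).elim id id
    rw [hB]
    rcases le_or_gt 1 (A i i) with h | h
    · exact le_max_of_le_left h
    · exact le_max_of_le_right ((one_le_inv₀ hAii).mpr h.le)
  have hμ1 : (1:ℝ) ≤ μ := by rw [hμ]; exact one_le_mtSpecRad hn hBnn hBdiag
  have hμ0 : (0:ℝ) < μ := lt_of_lt_of_le one_pos hμ1
  set C : Matrix (Fin n) (Fin n) ℝ := μ⁻¹ • B with hCdef
  have hCapp : ∀ i j, C i j = μ⁻¹ * B i j := fun i j => rfl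
  have hCnn : ∀ i j, 0 ≤ C i j := fun i j => by
    rw [hCapp]; exact mul_nonneg (inv_nonneg.mpr hμ0.le) (hBnn i j)
  have hcyc : ∀ (k : ℕ) (hk : 0 < k), k ≤ n → ∀ f : Fin k → Fin n,
      (∏ t : Fin k, C (f t) (f ⟨((t:ℕ)+1)%k, Nat.mod_lt _ hk⟩)) ≤ 1 := by
    intro k hk hkn f
    have hBc := cycle_prod_le_spec_pow hBnn k hk hkn f
    rw [← hμ] at hBc
    have hCeq : (∏ t : Fin k, C (f t) (f ⟨((t:ℕ)+1)%k, Nat.mod_lt _ hk⟩))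
        = (μ⁻¹)^k * (∏ t : Fin k, B (f t) (f ⟨((t:ℕ)+1)%k, Nat.mod_lt _ hk⟩)) := by
      calc (∏ t : Fin k, C (f t) (f ⟨((t:ℕ)+1)%k, Nat.mod_lt _ hk⟩))
          = ∏ t : Fin k, (μ⁻¹ * B (f t) (f ⟨((t:ℕ)+1)%k, Nat.mod_lt _ hk⟩)) :=
            Finset.prod_congr rfl fun t _ => hCapp _ _
        _ = (∏ _t : Fin k, μ⁻¹) * ∏ t : Fin k, B (f t) (f ⟨((t:ℕ)+1)%k, Nat.mod_lt _ hk⟩) :=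
            Finset.prod_mul_distrib
        _ = (μ⁻¹)^k * ∏ t : Fin k, B (f t) (f ⟨((t:ℕ)+1)%k, Nat.mod_lt _ hk⟩) := by
            rw [Finset.prod_const]; simp
    rw [hCeq]
    calc (μ⁻¹)^k * (∏ t : Fin k, B (f t) (f ⟨((t:ℕ)+1)%k, Nat.mod_lt _ hk⟩))
        ≤ (μ⁻¹)^k * μ^k := mul_le_mul_of_nonneg_left hBc (by positivity)
      _ = 1 := by rw [← mul_pow, inv_mul_cancel₀ hμ0.ne', one_pow]
  have hrho : mtRho A x = ⨆ p : Fin n × Fin n, B p.1 p.2 * x p.2 / x p.1 :=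
    mtRho_eq_rhoB hn hA hAA hB hx
  constructor
  · intro heq
    have hterm : ∀ i j, B i j * x j / x i ≤ μ := by
      intro i j
      rw [← heq, hrho]
      exact aux_le_ciSup (fun p : Fin n × Fin n => B p.1 p.2 * x p.2 / x p.1) (i, j)
    have hsub1 : ∀ i j, C i j * x j ≤ x i := by
      intro i j
      have h := hterm i j
      rw [div_le_iff₀ (hx i)] at h
      have h2 : C i j * x j = μ⁻¹ * (B i j * x j) := by rw [hCapp]; ring
      rw [h2]
      calc μ⁻¹ * (B i j * x j) ≤ μ⁻¹ * (μ * x i) :=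
            mul_le_mul_of_nonneg_left h (inv_nonneg.mpr hμ0.le)
        _ = x i := by field_simp
    have hsubm : ∀ m (i j : Fin n), mtPow C m i j * x j ≤ x i := by
      intro m
      induction m with
      | zero =>
        intro i j
        simp only [mtPow, Matrix.of_apply]
        split
        · next h => subst h; simp
        · simpa using (hx i).le
      | succ m ih =>
        intro i j
        obtain ⟨k₀, hk₀⟩ := aux_ciSup_attained (fun k => mtPow C m i k * C k j)
        rw [mtPow_succ_apply, hk₀, mul_assoc]
        calc mtPow C m i k₀ * (C k₀ j * x j) ≤ mtPow C m i k₀ * x k₀ :=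
              mul_le_mul_of_nonneg_left (hsub1 k₀ j) (mtPow_nonneg hn hCnn m i k₀)
          _ ≤ x i := ih i k₀
    have hstar : ∀ i j, mtStar C i j * x j ≤ x i := by
      intro i j
      obtain ⟨k₀, hk₀⟩ := aux_ciSup_attained (fun k : Fin n => mtPow C (k:ℕ) i j)
      have : mtStar C i j = mtPow C ((k₀:Fin n):ℕ) i j := hk₀
      rw [this]
      exact hsubm _ i j
    refine ⟨x, hx, ?_⟩
    funext i
    apply le_antisymm
    · calc x i = 1 * x i := (one_mul _).symm
        _ ≤ mtStar C i i * x i :=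
            mul_le_mul_of_nonneg_right (one_le_mtStar_diag hn C i) (hx i).le
        _ ≤ ⨆ j, mtStar C i j * x j := aux_le_ciSup (fun j => mtStar C i j * x j) i
    · exact ciSup_le fun j => hstar i j
  · rintro ⟨u, hu, hxu⟩
    have hxapp : ∀ i, x i = ⨆ j, mtStar C i j * u j := fun i => congrFun hxu i
    have hkey : ∀ i j, C i j * x j ≤ x i := by
      intro i j
      obtain ⟨k₀, hk₀⟩ := aux_ciSup_attained (fun k => mtStar C j k * u k)
      obtain ⟨m₀, hm₀⟩ := aux_ciSup_attained (fun m : Fin n => mtPow C (m:ℕ) j k₀)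
      have hstareq : mtStar C j k₀ = mtPow C ((m₀:Fin n):ℕ) j k₀ := hm₀
      rw [hxapp j, hk₀, hstareq]
      calc C i j * (mtPow C ((m₀:Fin n):ℕ) j k₀ * u k₀)
          = (C i j * mtPow C ((m₀:Fin n):ℕ) j k₀) * u k₀ := by ring
        _ ≤ mtPow C (((m₀:Fin n):ℕ)+1) i k₀ * u k₀ :=
            mul_le_mul_of_nonneg_right (mul_mtPow_le hn hCnn _ i j k₀) (hu k₀).le
        _ ≤ mtStar C i k₀ * u k₀ :=
            mul_le_mul_of_nonneg_right (mtPow_le_mtStar hn hCnn hcyc _ i k₀) (hu k₀).le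
        _ ≤ ⨆ k, mtStar C i k * u k := aux_le_ciSup (fun k => mtStar C i k * u k) k₀
        _ = x i := (hxapp i).symm
    rw [hrho]
    apply le_antisymm
    · apply ciSup_le
      rintro ⟨i, j⟩
      show B i j * x j / x i ≤ μ
      rw [div_le_iff₀ (hx i)]
      have h2 : B i j * x j = μ * (C i j * x j) := by
        rw [hCapp]; field_simp
      rw [h2]
      exact mul_le_mul_of_nonneg_left (hkey i j) hμ0.le
    · rw [hμ]
      have hρ0 : (0:ℝ) ≤ ⨆ p : Fin n × Fin n, B p.1 p.2 * x p.2 / x p.1 := by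
        refine le_trans ?_
          (aux_le_ciSup (fun p : Fin n × Fin n => B p.1 p.2 * x p.2 / x p.1) (⟨0,hn⟩, ⟨0,hn⟩))
        have h1 := hBnn (⟨0,hn⟩ : Fin n) (⟨0,hn⟩ : Fin n)
        have h2 := (hx (⟨0,hn⟩ : Fin n)).le
        positivity
      exact mtSpecRad_le hn hBnn hx hρ0
        (fun i j => aux_le_ciSup (fun p : Fin n × Fin n => B p.1 p.2 * x p.2 / x p.1) (i, j))



end
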